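/- arXiv:1307.0446 — 2 statements merged into one kernel-verified Lean document; each statement's English description precedes it below -/
import Mathlib

section
/- For a Gray–Hervella tensor A on the 4-dimensional Hermitian vector space (V, ⟨·,·⟩, J), the following two conditions are equivalent: (1) A(X,Y,Z) + A(JX,JY,Z) = 0 for all X, Y, Z ∈ V; (2) A(X,Y,Z) + A(Y,Z,X) + A(Z,X,Y) = 0 for all X, Y, Z ∈ V. (In real dimension 4, the quasi-Kähler condition on ∇F is equivalent to dF = 0.) -/
open scoped RealInnerProductSpace

set_option maxHeartbeats 1000000 in
/-- Let `(V, ⟨·,·⟩, J)` be a 4-dimensional Hermitian vector space (`J∘J = −Id`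
and `⟨JX,JY⟩ = ⟨X,Y⟩`).  For every Gray–Hervella tensor `A` on `V` (trilinear, with
`A(X,Y,Z) = −A(X,Z,Y)` and `A(X,Y,Z) = −A(X,JY,JZ)`), the following are equivalent:
(1) `A(X,Y,Z) + A(JX,JY,Z) = 0` for all `X,Y,Z`;
(2) `A(X,Y,Z) + A(Y,Z,X) + A(Z,X,Y) = 0` for all `X,Y,Z`.
(In real dimension 4, the quasi-Kähler condition on `∇F` is equivalent to `dF = 0`.) -/
theorem stmt_18 {V : Type*} [NormedAddCommGroup V] [InnerProductSpace ℝ V]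
    (h4 : Module.finrank ℝ V = 4)
    (J : V →ₗ[ℝ] V)
    (hJ2 : J ∘ₗ J = -LinearMap.id)
    (hJinner : ∀ X Y : V, ⟪J X, J Y⟫ = ⟪X, Y⟫)
    (A : V →ₗ[ℝ] V →ₗ[ℝ] V →ₗ[ℝ] ℝ)
    (hA1 : ∀ X Y Z : V, A X Y Z = -A X Z Y)
    (hA2 : ∀ X Y Z : V, A X Y Z = -A X (J Y) (J Z)) :
    (∀ X Y Z : V, A X Y Z + A (J X) (J Y) Z = 0) ↔
    (∀ X Y Z : V, A X Y Z + A Y Z X + A Z X Y = 0) := by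
  have hJJ : ∀ v : V, J (J v) = -v := by
    intro v
    have := congrArg (fun f : V →ₗ[ℝ] V => f v) hJ2
    simpa using this
  constructor
  · intro h1
    -- define the cyclic sum
    obtain ⟨C, hCapp⟩ : ∃ C : V →ₗ[ℝ] V →ₗ[ℝ] V →ₗ[ℝ] ℝ,
        ∀ X Y Z : V, C X Y Z = A X Y Z + A Y Z X + A Z X Y := by
      refine ⟨A + (LinearMap.lflip.comp A).flip +
        ((LinearMap.lflip.comp ((LinearMap.lflip.comp A).flip)).flip), ?_⟩
      intro X Y Z
      simp [LinearMap.lflip]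
      rfl
    -- c skew symmetries
    have s12 : ∀ X Y Z : V, C Y X Z = -C X Y Z := by
      intro X Y Z
      have a1 := hA1 X Y Z; have a2 := hA1 Y X Z; have a3 := hA1 Z X Y
      rw [hCapp, hCapp]; linarith [hA1 X Z Y, hA1 Y Z X, hA1 Z Y X]
    have s23 : ∀ X Y Z : V, C X Z Y = -C X Y Z := by
      intro X Y Z
      rw [hCapp, hCapp]; linarith [hA1 X Y Z, hA1 Y Z X, hA1 Z X Y]
    have h1' : ∀ X Y Z : V, A (J X) (J Y) Z = -A X Y Z := by
      intro X Y Z; have := h1 X Y Z; linarith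
    -- C (JX) (JY) Z = - C X Y Z
    have cJJ : ∀ X Y Z : V, C (J X) (J Y) Z = -C X Y Z := by
      intro X Y Z
      rw [hCapp, hCapp]
      have e1 : A (J X) (J Y) Z = -A X Y Z := h1' X Y Z
      have e2 : A Z (J X) (J Y) = -A Z X Y := by have := hA2 Z X Y; linarith
      have e3 : A (J Y) Z (J X) = -A Y Z X := by
        have h := hA2 (J Y) Z (J X)
        rw [hJJ X] at h
        have h2 : A (J Y) (J Z) (-X) = -A (J Y) (J Z) X := by simp
        have h3 : A (J Y) (J Z) X = -A Y Z X := h1' Y Z X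
        linarith
      linarith
    -- key : C v (J v) Z = 0
    have key0 : ∀ v Z : V, C v (J v) Z = 0 := by
      intro v Z
      have h := cJJ v (J v) Z
      rw [hJJ v] at h
      have h2 : C (J v) (-v) Z = -C (J v) v Z := by
        rw [hCapp, hCapp]; simp; ring
      have h3 : C (J v) v Z = -C v (J v) Z := s12 v (J v) Z
      linarith
    have k2 : ∀ v Z : V, C v Z (J v) = 0 := by
      intro v Z; have a := s23 v (J v) Z; have b := key0 v Z; linarith
    have k3 : ∀ v Z : V, C (J v) v Z = 0 := by
      intro v Z; have a := s12 v (J v) Z; have b := key0 v Z; linarith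
    have k4 : ∀ v Z : V, C (J v) Z v = 0 := by
      intro v Z; have a := s23 (J v) v Z; have b := k3 v Z; linarith
    have k5 : ∀ v Z : V, C Z v (J v) = 0 := by
      intro v Z; have a := s12 v Z (J v); have b := k2 v Z; linarith
    have k6 : ∀ v Z : V, C Z (J v) v = 0 := by
      intro v Z; have a := s23 Z v (J v); have b := k5 v Z; linarith
    have r1 : ∀ X Z : V, C X X Z = 0 := by
      intro X Z; have := s12 X X Z; linarith
    have r2 : ∀ X Y : V, C X Y X = 0 := by
      intro X Y
      rw [hCapp]
      linarith [hA1 X Y X, hA1 Y X X, hA1 X X Y]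
    have r3 : ∀ X Y : V, C X Y Y = 0 := by
      intro X Y; have := s23 X Y Y; linarith
    -- inner product preliminaries
    have hskew : ∀ x y : V, ⟪J x, y⟫ = -⟪x, J y⟫ := by
      intro x y
      have h := hJinner x (J y)
      rw [hJJ y] at h
      simp at h
      linarith
    have hxJx : ∀ x : V, ⟪x, J x⟫ = 0 := by
      intro x
      have h := hskew x x
      have h2 := real_inner_comm x (J x)
      linarith
    -- finite dimensionality
    have hfd : FiniteDimensional ℝ V := FiniteDimensional.of_finrank_pos (by rw [h4]; norm_num)
    have hnt : Nontrivial V := Module.nontrivial_of_finrank_pos (R := ℝ) (by rw [h4]; norm_num)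
    obtain ⟨v, hv⟩ := exists_ne (0 : V)
    set e1 : V := ‖v‖⁻¹ • v with he1
    have he1norm : ⟪e1, e1⟫ = 1 := by
      rw [he1, real_inner_smul_left, real_inner_smul_right, real_inner_self_eq_norm_sq]
      have : ‖v‖ ≠ 0 := norm_ne_zero_iff.mpr hv
      field_simp
    set W : Submodule ℝ V := Submodule.span ℝ ({e1, J e1} : Set V) with hW
    have hWle : Module.finrank ℝ W ≤ 2 := by
      classical
      haveI := (Set.toFinite ({e1, J e1} : Set V)).fintype
      refine le_trans (finrank_span_le_card _) ?_
      rw [Set.toFinset_insert, Set.toFinset_singleton]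
      exact le_trans (Finset.card_insert_le _ _) (by simp)
    have hWbot : Wᗮ ≠ ⊥ := by
      intro hbot
      rw [Submodule.orthogonal_eq_bot_iff] at hbot
      have : Module.finrank ℝ W = 4 := by rw [hbot, finrank_top, h4]
      omega
    obtain ⟨u, huW, hu⟩ := Submodule.exists_mem_ne_zero_of_ne_bot hWbot
    set e3 : V := ‖u‖⁻¹ • u with he3
    have he3W : e3 ∈ Wᗮ := Submodule.smul_mem _ _ huW
    have he3norm : ⟪e3, e3⟫ = 1 := by
      rw [he3, real_inner_smul_left, real_inner_smul_right, real_inner_self_eq_norm_sq]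
      have : ‖u‖ ≠ 0 := norm_ne_zero_iff.mpr hu
      field_simp
    have he1W : e1 ∈ W := Submodule.subset_span (by simp)
    have hJe1W : J e1 ∈ W := Submodule.subset_span (by simp)
    have o31 : ⟪e3, e1⟫ = 0 := by
      have := (Submodule.mem_orthogonal _ _).mp he3W e1 he1W
      rw [real_inner_comm] at this; exact this
    have o32 : ⟪e3, J e1⟫ = 0 := by
      have := (Submodule.mem_orthogonal _ _).mp he3W (J e1) hJe1W
      rw [real_inner_comm] at this; exact this
    -- the orthonormal family
    set f : Fin 4 → V := ![e1, J e1, e3, J e3] with hf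
    have hon : Orthonormal ℝ f := by
      rw [orthonormal_iff_ite]
      have oJ11 : ⟪J e1, J e1⟫ = 1 := by rw [hJinner]; exact he1norm
      have oJ33 : ⟪J e3, J e3⟫ = 1 := by rw [hJinner]; exact he3norm
      have o12 : ⟪e1, J e1⟫ = 0 := hxJx e1
      have o34 : ⟪e3, J e3⟫ = 0 := hxJx e3
      have o41 : ⟪J e3, e1⟫ = 0 := by
        rw [hskew]; linarith
      have o42 : ⟪J e3, J e1⟫ = 0 := by rw [hJinner]; exact o31
      have o13 : ⟪e1, e3⟫ = 0 := by rw [real_inner_comm]; exact o31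
      have o23 : ⟪J e1, e3⟫ = 0 := by rw [real_inner_comm]; exact o32
      have o14 : ⟪e1, J e3⟫ = 0 := by rw [real_inner_comm]; exact o41
      have o24 : ⟪J e1, J e3⟫ = 0 := by rw [real_inner_comm]; exact o42
      have o21 : ⟪J e1, e1⟫ = 0 := by rw [real_inner_comm]; exact o12
      have o43 : ⟪J e3, e3⟫ = 0 := by rw [real_inner_comm]; exact o34
      have n1 : ‖e1‖ = 1 := by
        have h := he1norm; rw [real_inner_self_eq_norm_sq] at h; nlinarith [norm_nonneg e1]
      have n2 : ‖J e1‖ = 1 := by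
        have h := oJ11; rw [real_inner_self_eq_norm_sq] at h; nlinarith [norm_nonneg (J e1)]
      have n3 : ‖e3‖ = 1 := by
        have h := he3norm; rw [real_inner_self_eq_norm_sq] at h; nlinarith [norm_nonneg e3]
      have n4 : ‖J e3‖ = 1 := by
        have h := oJ33; rw [real_inner_self_eq_norm_sq] at h; nlinarith [norm_nonneg (J e3)]
      intro i j
      fin_cases i <;> fin_cases j <;>
        simp [hf, he1norm, he3norm, oJ11, oJ33, o12, o34, o41, o42, o13, o23, o14, o24, o21, o43, o31, o32, n1, n2, n3, n4]
    -- basis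
    have hcard : Fintype.card (Fin 4) = Module.finrank ℝ V := by simp [h4]
    set b : Module.Basis (Fin 4) ℝ V := basisOfLinearIndependentOfCardEqFinrank hon.linearIndependent hcard with hb
    have hbf : ∀ i, b i = f i := by
      intro i
      rw [hb, coe_basisOfLinearIndependentOfCardEqFinrank]
    -- C vanishes on basis
    have base : ∀ i j k : Fin 4, C (f i) (f j) (f k) = 0 := by
      intro i j k
      fin_cases i <;> fin_cases j <;> fin_cases k <;>
        simp only [hf, Matrix.cons_val_zero, Matrix.cons_val_one, Matrix.head_cons,
          Matrix.cons_val_two, Matrix.tail_cons, Matrix.cons_val_three] <;>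
        first
          | apply r1 | apply r2 | apply r3
          | apply key0 | apply k2 | apply k3 | apply k4 | apply k5 | apply k6
    have hC0 : C = 0 := by
      apply b.ext; intro i
      apply b.ext; intro j
      apply b.ext; intro k
      rw [hbf i, hbf j, hbf k]
      simpa using base i j k
    intro X Y Z
    have h0 : C X Y Z = 0 := by rw [hC0]; simp
    rw [hCapp] at h0
    linarith
  · intro h2
    have key : ∀ X Y Z : V, A X Y Z + A (J X) (J Y) Z = -(A Z X Y + A (J Z) (J X) Y) := by
      intro X Y Z
      have hS := h2 (J X) Y (J Z)
      have e1 : A (J X) Y (J Z) = A (J X) (J Y) Z := by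
        have h := hA2 (J X) Y (J Z)
        rw [hJJ Z] at h
        have : A (J X) (J Y) (-Z) = -A (J X) (J Y) Z := by simp
        linarith
      have e2 : A Y (J Z) (J X) = -A Y Z X := by
        have := hA2 Y Z X; linarith
      have hS0 := h2 X Y Z
      linarith
    intro X Y Z
    have k1 := key X Y Z
    have k2 := key Z X Y
    have k3 := key Y Z X
    linarith
end

section
/- Let σ ∈ E be a unit vector and φ : E → ℝ a linear functional. Then for all U, V, W ∈ E orthogonal to σ one has ⟨U,V⟩·φ(σ×W) − ⟨U,W⟩·φ(σ×V) + ⟨U, σ×V⟩·φ(W) − ⟨U, σ×W⟩·φ(V) = 0 (identity (v) in the proof of Lemma 2 of the paper). -/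
open scoped RealInnerProductSpace

/-- Let `E` be a 3-dimensional oriented real inner product space with the
cross product `×` determined by the metric and orientation (characterized by
`⟨x×y, z⟩ = vol(x,y,z)`).  Let `σ ∈ E` be a unit vector and `φ : E → ℝ` a linear functional.
Then for all `U, V, W ∈ E` orthogonal to `σ` one has
`⟨U,V⟩·φ(σ×W) − ⟨U,W⟩·φ(σ×V) + ⟨U, σ×V⟩·φ(W) − ⟨U, σ×W⟩·φ(V) = 0`. -/
theorem stmt_19 {E : Type*} [NormedAddCommGroup E] [InnerProductSpace ℝ E]
    [Fact (Module.finrank ℝ E = 3)]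
    (o : Orientation ℝ E (Fin 3))
    (cross : E →ₗ[ℝ] E →ₗ[ℝ] E)
    (hcross : ∀ x y z : E, ⟪cross x y, z⟫ = o.volumeForm ![x, y, z])
    (σ : E) (hσ : ‖σ‖ = 1)
    (φ : E →ₗ[ℝ] ℝ) :
    ∀ U V W : E, ⟪U, σ⟫ = 0 → ⟪V, σ⟫ = 0 → ⟪W, σ⟫ = 0 →
      ⟪U, V⟫ * φ (cross σ W) - ⟪U, W⟫ * φ (cross σ V)
        + ⟪U, cross σ V⟫ * φ W - ⟪U, cross σ W⟫ * φ V = 0 := by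
  intro U V W hU hV hW
  have h3 : Module.finrank ℝ E = 3 := Fact.out
  set b : OrthonormalBasis (Fin 3) ℝ E := o.finOrthonormalBasis (by norm_num) h3 with hbdef
  have hb : b.toBasis.orientation = o := o.finOrthonormalBasis_orientation _ _
  -- volume form in coordinates
  have hvol : ∀ x y z : E, o.volumeForm ![x, y, z] =
      b.repr x 0 * (b.repr y 1 * b.repr z 2 - b.repr y 2 * b.repr z 1)
      - b.repr x 1 * (b.repr y 0 * b.repr z 2 - b.repr y 2 * b.repr z 0)
      + b.repr x 2 * (b.repr y 0 * b.repr z 1 - b.repr y 1 * b.repr z 0) := by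
    intro x y z
    rw [o.volumeForm_robust b hb, Module.Basis.det_apply, Matrix.det_fin_three]
    simp only [Module.Basis.toMatrix_apply, OrthonormalBasis.coe_toBasis_repr_apply,
      Matrix.cons_val', Matrix.cons_val_zero, Matrix.cons_val_one, Matrix.head_cons,
      Matrix.cons_val_two, Matrix.tail_cons, Matrix.empty_val', Matrix.cons_val_fin_one,
      Matrix.head_fin_const]
    ring
  -- inner products in coordinates
  have hinner : ∀ x y : E, ⟪x, y⟫ =
      b.repr x 0 * b.repr y 0 + b.repr x 1 * b.repr y 1 + b.repr x 2 * b.repr y 2 := by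
    intro x y
    rw [← b.sum_inner_mul_inner x y, Fin.sum_univ_three]
    simp only [b.repr_apply_apply]
    rw [real_inner_comm x (b 0), real_inner_comm x (b 1), real_inner_comm x (b 2)]
  -- φ in coordinates
  have hphi : ∀ x : E, φ x = b.repr x 0 * φ (b 0) + b.repr x 1 * φ (b 1)
      + b.repr x 2 * φ (b 2) := by
    intro x
    conv_lhs => rw [← b.sum_repr x]
    rw [map_sum, Fin.sum_univ_three]
    simp [smul_eq_mul]
  -- coordinates of the cross product
  have hcrepr : ∀ (x y : E) (i : Fin 3), b.repr (cross x y) i = o.volumeForm ![x, y, b i] := by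
    intro x y i
    rw [b.repr_apply_apply, real_inner_comm, hcross]
  have hreprself : ∀ i j : Fin 3, b.repr (b i) j = if j = i then 1 else 0 := by
    intro i j
    rw [b.repr_self i]
    simp [EuclideanSpace.single_apply]
  -- coordinate form of φ (cross x y)
  have hphicross : ∀ x y : E, φ (cross x y) =
      (b.repr x 1 * b.repr y 2 - b.repr x 2 * b.repr y 1) * φ (b 0)
      + (b.repr x 2 * b.repr y 0 - b.repr x 0 * b.repr y 2) * φ (b 1)
      + (b.repr x 0 * b.repr y 1 - b.repr x 1 * b.repr y 0) * φ (b 2) := by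
    intro x y
    rw [hphi (cross x y), hcrepr, hcrepr, hcrepr, hvol, hvol, hvol]
    simp [hreprself]
    ring
  -- hypotheses in coordinates
  have hU' : b.repr U 0 * b.repr σ 0 + b.repr U 1 * b.repr σ 1 + b.repr U 2 * b.repr σ 2 = 0 := by
    rw [← hinner]; exact hU
  have hV' : b.repr V 0 * b.repr σ 0 + b.repr V 1 * b.repr σ 1 + b.repr V 2 * b.repr σ 2 = 0 := by
    rw [← hinner]; exact hV
  have hW' : b.repr W 0 * b.repr σ 0 + b.repr W 1 * b.repr σ 1 + b.repr W 2 * b.repr σ 2 = 0 := by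
    rw [← hinner]; exact hW
  have hS : b.repr σ 0 * b.repr σ 0 + b.repr σ 1 * b.repr σ 1 + b.repr σ 2 * b.repr σ 2 = 1 := by
    rw [← hinner, real_inner_self_eq_norm_sq, hσ]; norm_num
  rw [hinner U V, hinner U W, hphicross, hphicross, hphi W, hphi V,
    real_inner_comm (cross σ V) U, real_inner_comm (cross σ W) U, hcross, hcross,
    hvol, hvol]
  linear_combination (((φ (b 0))*((b.repr V 1)*(b.repr W 2)-(b.repr V 2)*(b.repr W 1)) + (φ (b 1))*((b.repr V 2)*(b.repr W 0)-(b.repr V 0)*(b.repr W 2)) + (φ (b 2))*((b.repr V 0)*(b.repr W 1)-(b.repr V 1)*(b.repr W 0))) - ((b.repr V 0)*((b.repr W 1)*(b.repr σ 2)-(b.repr W 2)*(b.repr σ 1)) - (b.repr V 1)*((b.repr W 0)*(b.repr σ 2)-(b.repr W 2)*(b.repr σ 0)) + (b.repr V 2)*((b.repr W 0)*(b.repr σ 1)-(b.repr W 1)*(b.repr σ 0)))*((φ (b 0))*(b.repr σ 0)+(φ (b 1))*(b.repr σ 1)+(φ (b 2))*(b.repr σ 2))) * hU' + (-(((b.repr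 W 0)*((b.repr U 1)*(b.repr σ 2)-(b.repr U 2)*(b.repr σ 1)) - (b.repr W 1)*((b.repr U 0)*(b.repr σ 2)-(b.repr U 2)*(b.repr σ 0)) + (b.repr W 2)*((b.repr U 0)*(b.repr σ 1)-(b.repr U 1)*(b.repr σ 0))))*((φ (b 0))*(b.repr σ 0)+(φ (b 1))*(b.repr σ 1)+(φ (b 2))*(b.repr σ 2))) * hV' + (-(((b.repr U 0)*((b.repr V 1)*(b.repr σ 2)-(b.repr V 2)*(b.repr σ 1)) - (b.repr U 1)*((b.repr V 0)*(b.repr σ 2)-(b.repr V 2)*(b.repr σ 0)) + (b.repr U 2)*((b.repr V 0)*(b.repr σ 1)-(b.repr V 1)*(b.repr σ 0))))*((φ (b 0))*(b.repr σ 0)+(φ (b 1))*(b.repr σ 1)+(φ (b 2))*(b.repr σ 2))) * hW' + (((b.repr V 0)*((b.repr W 1)*(b.repr U 2)-(b.repr W 2)*(b.repr U 1)) - (b.repr V 1)*((b.repr W 0)*(b.repr U 2)-(b.repr W 2)*(b.repr U 0)) + (b.repr V 2)*((b.repr W 0)*(b.repr U 1)-(b.repr W 1)*(b.repr U 0)))*((φ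 (b 0))*(b.repr σ 0)+(φ (b 1))*(b.repr σ 1)+(φ (b 2))*(b.repr σ 2))) * hS
end
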